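/- The Van Lint–Schrijver graph on GF(64) (vertices GF(64), with x ~ y iff x − y is a nonzero cube) is isomorphic to the bilinear forms graph H₂(2,3): the graph whose vertices are all 2×3 matrices over GF(2), two matrices being adjacent iff their difference has rank 1. -/

import Mathlib

open Matrix in
lemma rank_eq_one_iff_vmv {K : Type*} [Field K] (M : Matrix (Fin 2) (Fin 3) K) :
    M.rank = 1 ↔ ∃ (u : Fin 2 → K) (v : Fin 3 → K), u ≠ 0 ∧ v ≠ 0 ∧ M = vecMulVec u v := by
  constructor
  · intro h
    rw [Matrix.rank] at h
    obtain ⟨w, hw0, hw⟩ := finrank_eq_one_iff'.mp h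
    set u : Fin 2 → K := (w : Fin 2 → K) with hu
    have hune : u ≠ 0 := fun h0 => hw0 (Subtype.ext h0)
    -- each column is a multiple of u
    have hcol : ∀ j : Fin 3, ∃ c : K, ∀ i, M i j = c * u i := by
      intro j
      have hmem : (fun i => M i j) ∈ LinearMap.range M.mulVecLin := by
        refine ⟨Pi.single j 1, ?_⟩
        ext i
        simp [Matrix.mulVecLin, Matrix.mulVec_single]
      obtain ⟨c, hc⟩ := hw ⟨_, hmem⟩
      have hval := congrArg Subtype.val hc
      rw [Submodule.coe_smul] at hval
      exact ⟨c, fun i => by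
        have := congrFun hval i
        simpa [hu] using this.symm⟩
    choose v hv using hcol
    refine ⟨u, v, hune, ?_, ?_⟩
    · intro hv0
      apply hune
      obtain ⟨y, hy⟩ := w.2
      have : u = M.mulVec y := by rw [hu, ← hy]; rfl
      ext i
      rw [this]
      simp only [Matrix.mulVec, dotProduct]
      apply Finset.sum_eq_zero
      intro k _
      rw [hv k i, congrFun hv0 k]
      simp
    · ext i j
      rw [Matrix.vecMulVec_apply]
      rw [hv j i]; ring
  · rintro ⟨u, v, hu, hv, rfl⟩
    rw [Matrix.rank]
    have hrange : ∀ w ∈ LinearMap.range (vecMulVec u v).mulVecLin, ∃ c : K, c • u = w := by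
      rintro w ⟨y, rfl⟩
      refine ⟨v ⬝ᵥ y, ?_⟩
      ext i
      simp [Matrix.mulVecLin, Matrix.mulVec, Matrix.vecMulVec_apply, dotProduct,
        Finset.mul_sum, mul_assoc, mul_comm, mul_left_comm]
    have humem : u ∈ LinearMap.range (vecMulVec u v).mulVecLin := by
      obtain ⟨j, hj⟩ : ∃ j, v j ≠ 0 := by
        by_contra hc
        push_neg at hc
        exact hv (funext hc)
      refine ⟨(fun k => if k = j then (v j)⁻¹ else 0), ?_⟩
      ext i
      simp only [Matrix.mulVecLin_apply, Matrix.mulVec, dotProduct, Matrix.vecMulVec_apply,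
        mul_ite, mul_zero]
      rw [Finset.sum_ite_eq' Finset.univ j fun k => u i * v k * (v j)⁻¹]
      simp [mul_assoc, mul_inv_cancel₀ hj]
    refine finrank_eq_one ⟨u, humem⟩ (fun h0 => hu (congrArg Subtype.val h0)) ?_
    rintro ⟨w, hwmem⟩
    obtain ⟨c, hc⟩ := hrange w hwmem
    exact ⟨c, Subtype.ext (by rw [Submodule.coe_smul]; exact hc)⟩


/-- Van Lint–Schrijver adjacency on a field: `x ~ y` iff `x - y` is a nonzero cube. -/
def vlsAdj {F : Type*} [Field F] (x y : F) : Prop :=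
  x ≠ y ∧ ∃ z : F, z ≠ 0 ∧ x - y = z ^ 3

/-- Adjacency of the bilinear forms graph on `2 × 3` matrices over a field `K`:
two matrices are adjacent iff their difference has rank 1. -/
def bilinearFormsAdj {K : Type*} [Field K] (A B : Matrix (Fin 2) (Fin 3) K) : Prop :=
  A ≠ B ∧ (A - B).rank = 1

set_option maxHeartbeats 1000000 in
/-- The Van Lint–Schrijver graph on `GF(64)` is isomorphic to the
bilinear forms graph `H₂(2,3)` on `2 × 3` matrices over `GF(2)`. -/
theorem vls64_iso_bilinearForms
    (F : Type*) [Field F] [Fintype F] (hF : Fintype.card F = 64) :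
    ∃ e : F ≃ Matrix (Fin 2) (Fin 3) (ZMod 2),
      ∀ x y : F, vlsAdj x y ↔ bilinearFormsAdj (e x) (e y) := by
  classical
  -- characteristic 2
  obtain ⟨n, hpn, hcard⟩ := FiniteField.card F (ringChar F)
  have hp2 : ringChar F = 2 := by
    have hdvd : ringChar F ∣ 64 := by
      rw [← hF, hcard]
      exact dvd_pow_self _ (by positivity)
    have h26 : ringChar F ∣ 2 ^ 6 := by norm_num; exact hdvd
    have : ringChar F ∣ 2 := hpn.dvd_of_dvd_pow h26
    exact (Nat.prime_dvd_prime_iff_eq hpn Nat.prime_two).mp this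
  haveI : CharP F 2 := by rw [← hp2]; exact ringChar.charP F
  have h2 : (2 : F) = 0 := by
    have := CharP.cast_eq_zero F 2
    norm_num at this
    exact this
  have hneg : ∀ x : F, -x = x := CharTwo.neg_eq
  have hsq : ∀ x y : F, (x + y) ^ 2 = x ^ 2 + y ^ 2 := CharTwo.add_sq
  have h4 : ∀ x y : F, (x + y) ^ 4 = x ^ 4 + y ^ 4 := by
    intro x y
    calc (x + y) ^ 4 = ((x + y) ^ 2) ^ 2 := by ring
    _ = (x ^ 2 + y ^ 2) ^ 2 := by rw [hsq]
    _ = (x ^ 2) ^ 2 + (y ^ 2) ^ 2 := hsq _ _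
    _ = x ^ 4 + y ^ 4 := by ring
  have h8 : ∀ x y : F, (x + y) ^ 8 = x ^ 8 + y ^ 8 := by
    intro x y
    calc (x + y) ^ 8 = ((x + y) ^ 4) ^ 2 := by ring
    _ = (x ^ 4 + y ^ 4) ^ 2 := by rw [h4]
    _ = (x ^ 4) ^ 2 + (y ^ 4) ^ 2 := hsq _ _
    _ = x ^ 8 + y ^ 8 := by ring
  -- generator of the unit group
  obtain ⟨g, hgm⟩ := IsCyclic.exists_monoid_generator (α := Fˣ)
  have hg : ∀ x : Fˣ, x ∈ Subgroup.zpowers g := by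
    intro x
    obtain ⟨n, hn⟩ := hgm x
    exact ⟨(n : ℤ), by exact_mod_cast hn⟩
  have hcardU : Fintype.card Fˣ = 63 := by rw [Fintype.card_units, hF]
  have hordg : orderOf g = 63 := by
    rw [orderOf_eq_card_of_forall_mem_zpowers hg, Nat.card_eq_fintype_card, hcardU]
  set a : F := ((g ^ 21 : Fˣ) : F) with ha_def
  set b : F := ((g ^ 9 : Fˣ) : F) with hb_def
  have ha0 : a ≠ 0 := Units.ne_zero _
  have hb0 : b ≠ 0 := Units.ne_zero _
  have hgpow : ∀ m : ℕ, 63 ∣ m → g ^ m = 1 := by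
    intro m hm
    exact orderOf_dvd_iff_pow_eq_one.mp (hordg ▸ hm)
  have ha3 : a ^ 3 = 1 := by
    rw [ha_def, ← Units.val_pow_eq_pow_val, ← pow_mul]
    rw [hgpow 63 (by norm_num)]
    rfl
  have hb7 : b ^ 7 = 1 := by
    rw [hb_def, ← Units.val_pow_eq_pow_val, ← pow_mul]
    rw [hgpow 63 (by norm_num)]
    rfl
  have hgne : ∀ m : ℕ, 0 < m → m < 63 → (g ^ m : Fˣ) ≠ 1 := by
    intro m hm1 hm2 hgm
    have := orderOf_dvd_of_pow_eq_one hgm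
    rw [hordg] at this
    exact absurd (Nat.le_of_dvd hm1 this) (by omega)
  have ha1 : a ≠ 1 := by
    intro h
    exact hgne 21 (by norm_num) (by norm_num) (Units.ext h)
  have hb1 : b ≠ 1 := by
    intro h
    exact hgne 9 (by norm_num) (by norm_num) (Units.ext h)
  have ha2 : a ^ 2 = a + 1 := by
    have hfac : (a + 1) * (a ^ 2 + a + 1) = 0 := by
      linear_combination ha3 + (a ^ 2 + a + 1) * h2
    rcases mul_eq_zero.mp hfac with h | h
    · exact absurd (by linear_combination h - h2) ha1
    · linear_combination h - h2 - a * h2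
  have ha4 : a ^ 4 = a := by
    calc a ^ 4 = a ^ 3 * a := by ring
    _ = a := by rw [ha3]; ring
  have hb8 : b ^ 8 = b := by
    calc b ^ 8 = b ^ 7 * b := by ring
    _ = b := by rw [hb7]; ring
  have hbcube : b ^ 3 = 1 → False := by
    intro h3
    apply hb1
    have : b ^ 7 = b := by
      calc b ^ 7 = (b ^ 3) ^ 2 * b := by ring
      _ = b := by rw [h3]; ring
    rw [hb7] at this
    exact this.symm
  -- the key quadratic independence lemma
  have hpow3 : ∀ x : F, x ^ 4 = x → x ≠ 0 → x ^ 3 = 1 := by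
    intro x h hx
    have hxx : x * x ^ 3 = x * 1 := by linear_combination h
    exact mul_left_cancel₀ hx hxx
  have hb4ne : b ^ 4 = b → False := fun h => hbcube (hpow3 b h hb0)
  have hb2ne : b ^ 2 = b → False := by
    intro h
    exact hb1 (mul_left_cancel₀ hb0 (by linear_combination h))
  have key : ∀ α₀ α₁ α₂ : F, α₀ ^ 4 = α₀ → α₁ ^ 4 = α₁ → α₂ ^ 4 = α₂ →
      α₂ * b ^ 2 + α₁ * b + α₀ = 0 → α₀ = 0 ∧ α₁ = 0 ∧ α₂ = 0 := by
    intro α₀ α₁ α₂ hh0 hh1 hh2 heq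
    by_cases hA2 : α₂ = 0
    · rw [hA2] at heq
      by_cases hA1 : α₁ = 0
      · rw [hA1] at heq
        refine ⟨by linear_combination heq, hA1, hA2⟩
      · exfalso
        have hbval : b = α₀ * α₁⁻¹ := by
          field_simp
          linear_combination heq - α₀ * h2
        apply hb4ne
        rw [hbval, mul_pow, inv_pow, hh0, hh1]
    · exfalso
      set β₁ : F := α₁ * α₂⁻¹ with hβ₁def
      set β₀ : F := α₀ * α₂⁻¹ with hβ₀def
      have hβ₁ : β₁ ^ 4 = β₁ := by rw [hβ₁def, mul_pow, inv_pow, hh1, hh2]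
      have hβ₀ : β₀ ^ 4 = β₀ := by rw [hβ₀def, mul_pow, inv_pow, hh0, hh2]
      have hb2 : b ^ 2 = β₁ * b + β₀ := by
        apply mul_left_cancel₀ hA2
        rw [hβ₁def, hβ₀def]
        field_simp
        linear_combination heq - (α₁ * b + α₀) * h2
      have hb4 : b ^ 4 = β₁ ^ 2 * b ^ 2 + β₀ ^ 2 := by
        calc b ^ 4 = (b ^ 2) ^ 2 := by ring
        _ = (β₁ * b + β₀) ^ 2 := by rw [hb2]
        _ = (β₁ * b) ^ 2 + β₀ ^ 2 := hsq _ _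
        _ = β₁ ^ 2 * b ^ 2 + β₀ ^ 2 := by ring
      have hb8' : b = β₁ * b ^ 4 + β₀ := by
        calc b = b ^ 8 := hb8.symm
        _ = (β₁ ^ 2 * b ^ 2 + β₀ ^ 2) ^ 2 := by rw [← hb4]; ring
        _ = (β₁ ^ 2 * b ^ 2) ^ 2 + (β₀ ^ 2) ^ 2 := hsq _ _
        _ = β₁ ^ 4 * (b ^ 2) ^ 2 + β₀ ^ 4 := by ring
        _ = β₁ * b ^ 4 + β₀ := by rw [hβ₁, hβ₀]; ring
      by_cases hB1 : β₁ = 0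
      · rw [hB1] at hb8'
        have hbb : b = β₀ := by linear_combination hb8'
        apply hb4ne
        calc b ^ 4 = β₀ ^ 4 := by rw [hbb]
        _ = β₀ := hβ₀
        _ = b := hbb.symm
      · have hβ₁3 : β₁ ^ 3 = 1 := hpow3 _ hβ₁ hB1
        set c : F := β₁ * β₀ ^ 2 + β₀ with hc
        have hc4 : c ^ 4 = c := by
          calc c ^ 4 = (β₁ * β₀ ^ 2) ^ 4 + β₀ ^ 4 := h4 _ _
          _ = β₁ ^ 4 * (β₀ ^ 4) ^ 2 + β₀ ^ 4 := by ring
          _ = c := by rw [hβ₁, hβ₀]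
        have hbb2 : b ^ 2 = b + c := by
          have hstep : b = b ^ 2 + c := by
            calc b = β₁ * b ^ 4 + β₀ := hb8'
            _ = β₁ * (β₁ ^ 2 * b ^ 2 + β₀ ^ 2) + β₀ := by rw [hb4]
            _ = β₁ ^ 3 * b ^ 2 + (β₁ * β₀ ^ 2 + β₀) := by ring
            _ = b ^ 2 + c := by rw [hβ₁3, hc]; ring
          linear_combination (-1 : F) * hstep - c * h2
        have hb4c : b ^ 4 = b + c + c ^ 2 := by
          calc b ^ 4 = (b ^ 2) ^ 2 := by ring
          _ = (b + c) ^ 2 := by rw [hbb2]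
          _ = b ^ 2 + c ^ 2 := hsq _ _
          _ = b + c + c ^ 2 := by rw [hbb2]
        have hb8e : b = b + c + c ^ 2 + c ^ 4 := by
          calc b = b ^ 8 := hb8.symm
          _ = (b ^ 4) ^ 2 := by ring
          _ = ((b + c) + c ^ 2) ^ 2 := by rw [hb4c]
          _ = (b + c) ^ 2 + (c ^ 2) ^ 2 := hsq _ _
          _ = (b ^ 2 + c ^ 2) + c ^ 4 := by rw [hsq]; ring
          _ = b + c + c ^ 2 + c ^ 4 := by rw [hbb2]
        have hcsq : c ^ 2 = 0 := by
          linear_combination (-1 : F) * hb8e - hc4 - c * h2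
        have hc0 : c = 0 := by
          exact pow_eq_zero_iff (two_ne_zero) |>.mp hcsq
        apply hb2ne
        rw [hbb2, hc0, add_zero]
  -- ZMod 2 module structure
  letI : Algebra (ZMod 2) F := ZMod.algebra F 2
  have hfinrank : Module.finrank (ZMod 2) F = 6 := by
    have hc := Module.card_eq_pow_finrank (K := ZMod 2) (V := F)
    rw [ZMod.card, hF] at hc
    rw [show (64:ℕ) = 2 ^ 6 by norm_num] at hc
    exact (Nat.pow_right_injective (le_refl 2) hc.symm)
  have hz01 : ∀ z : ZMod 2, z = 0 ∨ z = 1 := by decide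
  have hsmul1 : ∀ (z : ZMod 2) (x : F), z • x = (z • (1:F)) * x := by
    intro z x; rw [smul_mul_assoc, one_mul]
  set aelem : Fin 2 → F := ![1, a] with haelem
  set belem : Fin 3 → F := ![1, b, b ^ 2] with hbelem
  set wfam : Fin 2 × Fin 3 → F := fun p => aelem p.1 * belem p.2 with hwfam
  have hcomb0 : ∀ z w : ZMod 2, z • (1:F) + w • a = 0 → z = 0 ∧ w = 0 := by
    intro z w hzw
    rcases hz01 z with rfl | rfl <;> rcases hz01 w with rfl | rfl <;>
      simp only [zero_smul, one_smul, add_zero, zero_add] at hzw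
    · exact ⟨rfl, rfl⟩
    · exact absurd hzw ha0
    · exact absurd hzw one_ne_zero
    · exact absurd (by linear_combination hzw - h2) ha1
  have hpow4comb : ∀ z w : ZMod 2, (z • (1:F) + w • a) ^ 4 = z • (1:F) + w • a := by
    intro z w
    rcases hz01 z with rfl | rfl <;> rcases hz01 w with rfl | rfl <;>
      simp only [zero_smul, one_smul, add_zero, zero_add]
    · exact zero_pow (by norm_num)
    · exact ha4
    · exact one_pow 4
    · rw [h4, one_pow, ha4]
  have hli : LinearIndependent (ZMod 2) wfam := by
    rw [Fintype.linearIndependent_iff]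
    intro cf hcf
    set A0 : F := cf (0,0) • (1:F) + cf (1,0) • a with hA0
    set A1 : F := cf (0,1) • (1:F) + cf (1,1) • a with hA1
    set A2 : F := cf (0,2) • (1:F) + cf (1,2) • a with hA2
    have hsum : ∑ p : Fin 2 × Fin 3, cf p • wfam p = A2 * b ^ 2 + A1 * b + A0 := by
      rw [Fintype.sum_prod_type]
      simp only [Fin.sum_univ_two, Fin.sum_univ_three, hwfam, haelem, hbelem,
        Matrix.cons_val_zero, Matrix.cons_val_one, Matrix.head_cons, Matrix.cons_val_two,
        Matrix.tail_cons]
      rw [hA0, hA1, hA2]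
      rw [hsmul1 (cf (0,0)), hsmul1 (cf (0,1)), hsmul1 (cf (0,2)), hsmul1 (cf (1,0)),
        hsmul1 (cf (1,1)), hsmul1 (cf (1,2)), hsmul1 (cf (1,0)) a, hsmul1 (cf (1,1)) a,
        hsmul1 (cf (1,2)) a]
      ring
    rw [hsum] at hcf
    obtain ⟨e0, e1, e2⟩ := key A0 A1 A2 (by rw [hA0]; exact hpow4comb _ _)
      (by rw [hA1]; exact hpow4comb _ _) (by rw [hA2]; exact hpow4comb _ _) hcf
    have c00 := hcomb0 _ _ e0
    have c01 := hcomb0 _ _ e1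
    have c02 := hcomb0 _ _ e2
    rintro ⟨i, j⟩
    fin_cases i <;> fin_cases j <;> tauto
  have hcardprod : Fintype.card (Fin 2 × Fin 3) = 6 := by simp
  let B : Module.Basis (Fin 2 × Fin 3) (ZMod 2) F :=
    basisOfLinearIndependentOfCardEqFinrank hli (by rw [hcardprod, hfinrank])
  have hB : ⇑B = wfam := coe_basisOfLinearIndependentOfCardEqFinrank hli _
  let eM : F ≃ Matrix (Fin 2) (Fin 3) (ZMod 2) :=
    B.equivFun.toEquiv.trans ((Equiv.curry (Fin 2) (Fin 3) (ZMod 2)).trans Matrix.of)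
  have heM : ∀ (x : F) (i : Fin 2) (j : Fin 3), eM x i j = B.equivFun x (i, j) := by
    intro x i j; rfl
  have hsub : ∀ x y : F, eM x - eM y = eM (x - y) := by
    intro x y
    ext i j
    rw [Matrix.sub_apply, heM, heM, heM, map_sub]
    rfl
  have hprod : ∀ (u : Fin 2 → ZMod 2) (v : Fin 3 → ZMod 2) (x : F),
      eM x = Matrix.vecMulVec u v ↔
        x = (∑ i, u i • aelem i) * (∑ j, v j • belem j) := by
    intro u v x
    have h1' : eM x = Matrix.vecMulVec u v ↔ B.equivFun x = fun p => u p.1 * v p.2 := by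
      constructor
      · intro h
        funext p
        have := congrFun (congrFun h p.1) p.2
        rw [heM] at this
        rw [this, Matrix.vecMulVec_apply]
      · intro h
        ext i j
        rw [heM, h, Matrix.vecMulVec_apply]
    have hsymm : B.equivFun.symm (fun p : Fin 2 × Fin 3 => u p.1 * v p.2)
        = (∑ i, u i • aelem i) * (∑ j, v j • belem j) := by
      rw [Module.Basis.equivFun_symm_apply, Finset.sum_mul_sum, Fintype.sum_prod_type]
      refine Finset.sum_congr rfl fun i _ => Finset.sum_congr rfl fun j _ => ?_
      rw [hB]
      show (u i * v j) • (aelem i * belem j) = (u i • aelem i) * (v j • belem j)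
      exact (smul_mul_smul_comm _ _ _ _).symm
    rw [h1', ← LinearEquiv.eq_symm_apply, hsymm]
  set comboA : (Fin 2 → ZMod 2) → F := fun u => ∑ i, u i • aelem i with hcomboA
  set comboB : (Fin 3 → ZMod 2) → F := fun v => ∑ j, v j • belem j with hcomboB
  have hcomboA_expand : ∀ u, comboA u = u 0 • (1:F) + u 1 • a := by
    intro u
    rw [hcomboA]
    simp only [Fin.sum_univ_two, haelem, Matrix.cons_val_zero, Matrix.cons_val_one,
      Matrix.head_cons]
  have hcomboB_expand : ∀ v, comboB v = (v 0 • (1:F)) + (v 1 • (1:F)) * b + (v 2 • (1:F)) * b ^ 2 := by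
    intro v
    rw [hcomboB]
    simp only [Fin.sum_univ_three, hbelem, Matrix.cons_val_zero, Matrix.cons_val_one,
      Matrix.head_cons, Matrix.cons_val_two, Matrix.tail_cons]
    rw [hsmul1 (v 1) b, hsmul1 (v 2) (b ^ 2)]
  have hz4 : ∀ z : ZMod 2, (z • (1:F)) ^ 4 = z • (1:F) := by
    intro z; rcases hz01 z with rfl | rfl <;> simp
  have hz0 : ∀ z : ZMod 2, z • (1:F) = 0 → z = 0 := by
    intro z hz; rcases hz01 z with rfl | rfl
    · rfl
    · rw [one_smul] at hz; exact absurd hz one_ne_zero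
  -- comboA is injective, nonzero for nonzero input, and lands in cube roots of 1
  have hcomboA_inj : Function.Injective comboA := by
    intro u u' huu
    have hdiff : (u 0 - u' 0) • (1:F) + (u 1 - u' 1) • a = 0 := by
      rw [sub_smul, sub_smul]
      rw [hcomboA_expand, hcomboA_expand] at huu
      linear_combination huu
    obtain ⟨hz, hw⟩ := hcomb0 _ _ hdiff
    funext i
    fin_cases i
    · exact sub_eq_zero.mp hz
    · exact sub_eq_zero.mp hw
  have hcomboA_ne : ∀ u, u ≠ 0 → comboA u ≠ 0 := by
    intro u hu hc
    apply hu
    rw [hcomboA_expand] at hc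
    obtain ⟨hz, hw⟩ := hcomb0 _ _ hc
    funext i; fin_cases i <;> assumption
  have hcomboA_pow : ∀ u, (comboA u) ^ 4 = comboA u := by
    intro u; rw [hcomboA_expand]; exact hpow4comb _ _
  have hcomboA_cube : ∀ u, u ≠ 0 → (comboA u) ^ 3 = 1 := fun u hu =>
    hpow3 _ (hcomboA_pow u) (hcomboA_ne u hu)
  -- comboB
  have hcomboB_inj : Function.Injective comboB := by
    intro v v' hvv
    rw [hcomboB_expand, hcomboB_expand] at hvv
    have hdiff : ((v 2 - v' 2) • (1:F)) * b ^ 2 + ((v 1 - v' 1) • (1:F)) * b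
        + (v 0 - v' 0) • (1:F) = 0 := by
      rw [sub_smul, sub_smul, sub_smul]
      linear_combination hvv
    obtain ⟨hz0', hz1', hz2'⟩ := key _ _ _ (hz4 _) (hz4 _) (hz4 _) hdiff
    funext i
    fin_cases i
    · exact sub_eq_zero.mp (hz0 _ hz0')
    · exact sub_eq_zero.mp (hz0 _ hz1')
    · exact sub_eq_zero.mp (hz0 _ hz2')
  have hcomboB_ne : ∀ v, v ≠ 0 → comboB v ≠ 0 := by
    intro v hv hc
    apply hv
    have : comboB v = comboB 0 := by
      rw [hc, hcomboB_expand]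
      simp
    exact hcomboB_inj this
  have hcomboB_pow : ∀ v, (comboB v) ^ 8 = comboB v := by
    intro v
    rw [hcomboB_expand]
    rw [h8, h8]
    have e0 : ((v 0 • (1:F))) ^ 8 = v 0 • (1:F) := by
      rcases hz01 (v 0) with h | h <;> rw [h] <;> simp
    have e1 : ((v 1 • (1:F)) * b) ^ 8 = (v 1 • (1:F)) * b := by
      rcases hz01 (v 1) with h | h <;> rw [h] <;> simp [hb8]
    have e2 : ((v 2 • (1:F)) * b ^ 2) ^ 8 = (v 2 • (1:F)) * b ^ 2 := by
      have hb16 : (b ^ 2) ^ 8 = b ^ 2 := by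
        calc (b ^ 2) ^ 8 = (b ^ 8) ^ 2 := by ring
        _ = b ^ 2 := by rw [hb8]
      rcases hz01 (v 2) with h | h <;> rw [h] <;> simp [hb16]
    rw [e0, e1, e2]
  have hpow7 : ∀ x : F, x ^ 8 = x → x ≠ 0 → x ^ 7 = 1 := by
    intro x h hx
    have hxx : x * x ^ 7 = x * 1 := by linear_combination h
    exact mul_left_cancel₀ hx hxx
  have hcomboB_seven : ∀ v, v ≠ 0 → (comboB v) ^ 7 = 1 := fun v hv =>
    hpow7 _ (hcomboB_pow v) (hcomboB_ne v hv)
  -- surjectivity onto roots of unity via counting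
  have hsurj3 : ∀ p : F, p ^ 3 = 1 → ∃ u, u ≠ 0 ∧ comboA u = p := by
    intro p hp
    classical
    set S3 : Finset F :=
      ((Finset.univ : Finset (Fin 2 → ZMod 2)).filter (· ≠ 0)).image comboA with hS3
    have hcardS3 : S3.card = 3 := by
      rw [hS3, Finset.card_image_of_injective _ hcomboA_inj]
      rw [Finset.filter_ne' Finset.univ 0, Finset.card_erase_of_mem (Finset.mem_univ _)]
      simp
    have hsub3 : S3 ⊆ (Polynomial.nthRoots 3 (1:F)).toFinset := by
      intro x hx
      rw [hS3] at hx
      obtain ⟨u, hu, rfl⟩ := Finset.mem_image.mp hx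
      rw [Multiset.mem_toFinset, Polynomial.mem_nthRoots (by norm_num)]
      exact hcomboA_cube u (by simpa using (Finset.mem_filter.mp hu).2)
    have hcard3 : (Polynomial.nthRoots 3 (1:F)).toFinset.card ≤ 3 :=
      le_trans (Multiset.toFinset_card_le _) (Polynomial.card_nthRoots 3 1)
    have heq3 : S3 = (Polynomial.nthRoots 3 (1:F)).toFinset :=
      Finset.eq_of_subset_of_card_le hsub3 (by rw [hcardS3]; exact hcard3)
    have hpmem : p ∈ S3 := by
      rw [heq3, Multiset.mem_toFinset, Polynomial.mem_nthRoots (by norm_num)]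
      exact hp
    rw [hS3] at hpmem
    obtain ⟨u, hu, hup⟩ := Finset.mem_image.mp hpmem
    exact ⟨u, by simpa using (Finset.mem_filter.mp hu).2, hup⟩
  have hsurj7 : ∀ r : F, r ^ 7 = 1 → ∃ v, v ≠ 0 ∧ comboB v = r := by
    intro r hr
    set S7 : Finset F :=
      ((Finset.univ : Finset (Fin 3 → ZMod 2)).filter (· ≠ 0)).image comboB with hS7
    have hcardS7 : S7.card = 7 := by
      rw [hS7, Finset.card_image_of_injective _ hcomboB_inj]
      rw [Finset.filter_ne' Finset.univ 0, Finset.card_erase_of_mem (Finset.mem_univ _)]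
      simp
    have hsub7 : S7 ⊆ (Polynomial.nthRoots 7 (1:F)).toFinset := by
      intro x hx
      rw [hS7] at hx
      obtain ⟨v, hv, rfl⟩ := Finset.mem_image.mp hx
      rw [Multiset.mem_toFinset, Polynomial.mem_nthRoots (by norm_num)]
      exact hcomboB_seven v (by simpa using (Finset.mem_filter.mp hv).2)
    have hcard7 : (Polynomial.nthRoots 7 (1:F)).toFinset.card ≤ 7 :=
      le_trans (Multiset.toFinset_card_le _) (Polynomial.card_nthRoots 7 1)
    have heq7 : S7 = (Polynomial.nthRoots 7 (1:F)).toFinset :=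
      Finset.eq_of_subset_of_card_le hsub7 (by rw [hcardS7]; exact hcard7)
    have hrmem : r ∈ S7 := by
      rw [heq7, Multiset.mem_toFinset, Polynomial.mem_nthRoots (by norm_num)]
      exact hr
    rw [hS7] at hrmem
    obtain ⟨v, hv, hvr⟩ := Finset.mem_image.mp hrmem
    exact ⟨v, by simpa using (Finset.mem_filter.mp hv).2, hvr⟩
  have hprod' : ∀ (u : Fin 2 → ZMod 2) (v : Fin 3 → ZMod 2) (x : F),
      eM x = Matrix.vecMulVec u v ↔ x = comboA u * comboB v := by
    intro u v x
    rw [hcomboA, hcomboB]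
    exact hprod u v x
  -- decomposition of 21st roots of unity
  have hdec : ∀ x : F, x ≠ 0 → x ^ 21 = 1 → ∃ m : ℕ, x = ((g ^ (3 * m) : Fˣ) : F) := by
    intro x hx h21
    obtain ⟨k, hk0⟩ := hgm (Units.mk0 x hx)
    have hk : g ^ k = Units.mk0 x hx := hk0
    have hxu21 : (Units.mk0 x hx) ^ 21 = 1 := by
      ext
      rw [Units.val_pow_eq_pow_val, Units.val_one]
      exact h21
    have hk21 : g ^ (k * 21) = 1 := by
      rw [pow_mul, hk, hxu21]
    have hdvd : 63 ∣ k * 21 := by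
      rw [← hordg]
      exact orderOf_dvd_of_pow_eq_one hk21
    obtain ⟨m, hm⟩ : 3 ∣ k := by
      obtain ⟨t, ht⟩ := hdvd
      omega
    refine ⟨m, ?_⟩
    have hx' : ((g ^ k : Fˣ) : F) = x := by rw [hk]; rfl
    rw [← hx', hm]
  have hcube21 : ∀ x : F, x ≠ 0 → ((∃ z : F, z ≠ 0 ∧ x = z ^ 3) ↔ x ^ 21 = 1) := by
    intro x hx
    constructor
    · rintro ⟨z, hz, rfl⟩
      have h63 : z ^ 63 = 1 := by
        have h := FiniteField.pow_card_sub_one_eq_one z hz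
        rw [hF] at h
        norm_num at h
        exact h
      calc (z ^ 3) ^ 21 = z ^ 63 := by ring
      _ = 1 := h63
    · intro h21
      obtain ⟨m, hm⟩ := hdec x hx h21
      refine ⟨((g ^ m : Fˣ) : F), Units.ne_zero _, ?_⟩
      rw [hm, ← Units.val_pow_eq_pow_val, ← pow_mul, Nat.mul_comm]
  have hpr21 : ∀ x : F, x ≠ 0 → (x ^ 21 = 1 ↔
      ∃ p r : F, p ^ 3 = 1 ∧ r ^ 7 = 1 ∧ x = p * r) := by
    intro x hx
    constructor
    · intro h21
      obtain ⟨m, hm⟩ := hdec x hx h21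
      refine ⟨((g ^ (21 * m) : Fˣ) : F), ((g ^ (45 * m) : Fˣ) : F), ?_, ?_, ?_⟩
      · rw [← Units.val_pow_eq_pow_val, ← pow_mul, ← Units.val_one (α := F)]
        congr 1
        apply hgpow
        omega
      · rw [← Units.val_pow_eq_pow_val, ← pow_mul, ← Units.val_one (α := F)]
        congr 1
        apply hgpow
        omega
      · rw [hm, ← Units.val_mul, ← pow_add]
        congr 1
        have h66 : 21 * m + 45 * m = 3 * m + 63 * m := by omega
        rw [h66, pow_add, hgpow (63 * m) ⟨m, rfl⟩, mul_one]
    · rintro ⟨p, r, hp3, hr7, rfl⟩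
      calc (p * r) ^ 21 = (p ^ 3) ^ 7 * (r ^ 7) ^ 3 := by ring
      _ = 1 := by rw [hp3, hr7]; simp
  refine ⟨eM, ?_⟩
  intro x y
  simp only [vlsAdj, bilinearFormsAdj]
  constructor
  · rintro ⟨hxy, z, hz, hxyz⟩
    refine ⟨fun hc => hxy (eM.injective hc), ?_⟩
    rw [hsub]
    have hxy0 : x - y ≠ 0 := sub_ne_zero_of_ne hxy
    have h21 : (x - y) ^ 21 = 1 := (hcube21 _ hxy0).mp ⟨z, hz, hxyz⟩
    obtain ⟨p, r, hp3, hr7, hpr⟩ := (hpr21 _ hxy0).mp h21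
    obtain ⟨u, hu, hup⟩ := hsurj3 p hp3
    obtain ⟨v, hv, hvr⟩ := hsurj7 r hr7
    rw [rank_eq_one_iff_vmv]
    refine ⟨u, v, hu, hv, ?_⟩
    exact (hprod' u v (x - y)).mpr (by rw [hpr, ← hup, ← hvr])
  · rintro ⟨hne, hrank⟩
    have hxy : x ≠ y := fun hc => hne (by rw [hc])
    refine ⟨hxy, ?_⟩
    rw [hsub] at hrank
    obtain ⟨u, v, hu, hv, huv⟩ := (rank_eq_one_iff_vmv _).mp hrank
    have hxyval : x - y = comboA u * comboB v := (hprod' u v (x - y)).mp huv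
    have hxy0 : x - y ≠ 0 := by
      rw [hxyval]
      exact mul_ne_zero (hcomboA_ne u hu) (hcomboB_ne v hv)
    exact (hcube21 _ hxy0).mpr ((hpr21 _ hxy0).mpr
      ⟨comboA u, comboB v, hcomboA_cube u hu, hcomboB_seven v hv, hxyval⟩)
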